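/- Let n = 0 and m < 0 be integers, and suppose g is holomorphic near 0 with g(0) ≠ 0 and g' vanishing to order r ≥ 0 at 0, and dh = z^m H̃(z)dz with H̃(0) ≠ 0. Then the Hopf differential Q = -(1/2)(g'/g)·z^m H̃(z) dz² has order m + r at 0, the Jorge–Meeks multiplicity is ν = -m - 1, and the identity ν = r - ord₀(Q) - 1 holds. -/

import Mathlib

open Filter Topology

/-- Case `n = 0`, `m < 0`: if `g` is holomorphic near `0` with `g 0 ≠ 0` and
`g'` vanishes to order `r` at `0` (`g'(z) = z^r·G(z)`, `G 0 ≠ 0`), and `dh = z^m·H̃(z) dz`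
(`H̃ 0 ≠ 0`, `m < 0`), then the Hopf differential coefficient
`q(z) = -(1/2)·(g'(z)/g(z))·z^m·H̃(z)` has order `m + r` at `0`, the Jorge–Meeks multiplicity
is `ν = -m - 1`, and `ν = r - (m + r) - 1`. -/
theorem hopf_order_case_n_zero
    (g G H' : ℂ → ℂ) (r : ℕ) (m : ℤ) (hm : m < 0)
    (hg : AnalyticAt ℂ g 0) (hg0 : g 0 ≠ 0)
    (hG : AnalyticAt ℂ G 0) (hG0 : G 0 ≠ 0)
    (hgd : ∀ᶠ z in 𝓝 (0 : ℂ), deriv g z = z ^ r * G z)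
    (hH : AnalyticAt ℂ H' 0) (hH0 : H' 0 ≠ 0) :
    (∃ K : ℂ → ℂ, AnalyticAt ℂ K 0 ∧ K 0 ≠ 0 ∧
        ∀ᶠ z in 𝓝[≠] (0 : ℂ),
          -(1 / 2) * (deriv g z / g z) * (z ^ m * H' z) = z ^ (m + (r : ℤ)) * K z) ∧
      (-m - 1 : ℤ) = (r : ℤ) - (m + (r : ℤ)) - 1 := by
  refine ⟨⟨fun z => -(1 / 2) * (G z / g z) * H' z, ?_, ?_, ?_⟩, by ring⟩
  · exact (analyticAt_const.mul (hG.div hg hg0)).mul hH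
  · simp only [ne_eq, mul_eq_zero, div_eq_zero_iff]
    push_neg
    exact ⟨⟨by norm_num, hG0, hg0⟩, hH0⟩
  · filter_upwards [self_mem_nhdsWithin, nhdsWithin_le_nhds hgd] with z hz hd
    rw [hd]
    have hz' : (z : ℂ) ≠ 0 := hz
    rw [zpow_add₀ hz', zpow_natCast]
    field_simp
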